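/- Suppose F : ℝ^d → ℝ is twice differentiable with ‖∇²F(x) - ∇²F(x_t)‖ ≤ L‖x - x_t‖ for all x on the segment [x_t, x_t + s_t], and the inexact Hessian H_t satisfies ‖(H_t - ∇²F(x_t)) s_t‖ ≤ ε‖s_t‖. Let m_t(s) = ⟨∇F(x_t), s⟩ + (1/2)⟨s, H_t s⟩ + (σ_t/3)‖s‖³ with σ_t > 0. Then F(x_t + s_t) - F(x_t) - m_t(s_t) ≤ (L/2 - σ_t/3)‖s_t‖³ + (ε/2)‖s_t‖². -/

import Mathlib

open scoped InnerProductSpace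

/-- Discrepancy between the cubic-regularized model with inexact Hessian and the
true objective. -/
theorem model_discrepancy_ARC {d : ℕ}
    (F : EuclideanSpace ℝ (Fin d) → ℝ)
    (Hess : EuclideanSpace ℝ (Fin d) →
      (EuclideanSpace ℝ (Fin d) →L[ℝ] EuclideanSpace ℝ (Fin d)))
    (hF1 : ∀ x, HasGradientAt F (gradient F x) x)
    (hF2 : ∀ x, HasFDerivAt (gradient F) (Hess x) x)
    (xt st : EuclideanSpace ℝ (Fin d)) (L ε σt : ℝ)
    (hL : 0 < L) (hε : 0 < ε) (hσ : 0 < σt)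
    (hLip : ∀ x ∈ segment ℝ xt (xt + st), ‖Hess x - Hess xt‖ ≤ L * ‖x - xt‖)
    (Ht : EuclideanSpace ℝ (Fin d) →L[ℝ] EuclideanSpace ℝ (Fin d))
    (hHt : ‖(Ht - Hess xt) st‖ ≤ ε * ‖st‖)
    (m : EuclideanSpace ℝ (Fin d) → ℝ)
    (hm : ∀ s, m s = ⟪gradient F xt, s⟫_ℝ + (1 / 2) * ⟪s, Ht s⟫_ℝ + σt / 3 * ‖s‖ ^ 3) :
    F (xt + st) - F xt - m st ≤ (L / 2 - σt / 3) * ‖st‖ ^ 3 + ε / 2 * ‖st‖ ^ 2 := by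
  set c : ℝ → EuclideanSpace ℝ (Fin d) := fun u => xt + u • st with hc_def
  set a : ℝ := ⟪gradient F xt, st⟫_ℝ with ha_def
  set b : ℝ := ⟪(Hess xt) st, st⟫_ℝ with hb_def
  have hc0 : c 0 = xt := by simp [hc_def]
  have hc1 : c 1 = xt + st := by simp [hc_def]
  -- derivative of c
  have hc : ∀ u : ℝ, HasDerivAt c st u := by
    intro u
    have h1 : HasDerivAt (fun u : ℝ => u • st) ((1:ℝ) • st) u :=
      (hasDerivAt_id u).smul_const st
    simpa [hc_def, one_smul] using h1.const_add xt
  have hcmem : ∀ u ∈ Set.Icc (0:ℝ) 1, c u ∈ segment ℝ xt (xt + st) := by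
    intro u hu
    rw [segment_eq_image']
    exact ⟨u, hu, by simp [hc_def]⟩
  have hcsub : ∀ u : ℝ, c u - xt = u • st := by intro u; simp [hc_def]
  -- the vector function G
  set G : ℝ → EuclideanSpace ℝ (Fin d) :=
    fun u => gradient F (c u) - u • ((Hess xt) st) with hG_def
  have hG : ∀ u : ℝ, HasDerivAt G ((Hess (c u)) st - (Hess xt) st) u := by
    intro u
    have h1 : HasDerivAt (fun u => gradient F (c u)) ((Hess (c u)) st) u := by
      have := (hF2 (c u)).comp_hasDerivAt u (hc u)
      exact this
    have h2 : HasDerivAt (fun u : ℝ => u • ((Hess xt) st)) ((1:ℝ) • ((Hess xt) st)) u :=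
      (hasDerivAt_id u).smul_const _
    have h3 := h1.sub h2
    rw [one_smul] at h3
    exact h3
  -- key bound: ‖G t - G 0‖ ≤ L * t * ‖st‖^2 * t for t ∈ [0,1]
  have hGbound : ∀ t ∈ Set.Icc (0:ℝ) 1, ‖G t - G 0‖ ≤ L * t * ‖st‖ ^ 2 * t := by
    intro t ht
    have := norm_image_sub_le_of_norm_deriv_le_segment'
      (f := G) (f' := fun u => (Hess (c u)) st - (Hess xt) st)
      (a := 0) (b := t) (C := L * t * ‖st‖ ^ 2)
      (fun u _ => (hG u).hasDerivWithinAt) ?_ t (Set.right_mem_Icc.2 ht.1)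
    · simpa using this
    · intro u hu
      have hu01 : u ∈ Set.Icc (0:ℝ) 1 := ⟨hu.1, le_trans (le_of_lt hu.2) ht.2⟩
      have h1 : ‖(Hess (c u)) st - (Hess xt) st‖ ≤ ‖Hess (c u) - Hess xt‖ * ‖st‖ := by
        rw [show (Hess (c u)) st - (Hess xt) st = (Hess (c u) - Hess xt) st from
          (ContinuousLinearMap.sub_apply _ _ _).symm]
        exact (Hess (c u) - Hess xt).le_opNorm st
      have h2 : ‖Hess (c u) - Hess xt‖ ≤ L * (u * ‖st‖) := by
        have := hLip (c u) (hcmem u hu01)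
        rwa [hcsub, norm_smul, Real.norm_eq_abs, abs_of_nonneg hu.1] at this
      have h3 : u * ‖st‖ ≤ t * ‖st‖ :=
        mul_le_mul_of_nonneg_right (le_of_lt hu.2) (norm_nonneg st)
      calc ‖(Hess (c u)) st - (Hess xt) st‖ ≤ (L * (u * ‖st‖)) * ‖st‖ :=
              h1.trans (mul_le_mul_of_nonneg_right h2 (norm_nonneg st))
        _ ≤ (L * (t * ‖st‖)) * ‖st‖ := by
              apply mul_le_mul_of_nonneg_right _ (norm_nonneg st)
              exact mul_le_mul_of_nonneg_left h3 hL.le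
        _ = L * t * ‖st‖ ^ 2 := by ring
  -- scalar comparison function h
  set h : ℝ → ℝ := fun t =>
    L / 2 * t ^ 2 * ‖st‖ ^ 3 - (F (c t) - F (c 0) - t * a - t ^ 2 / 2 * b) with hh_def
  have hh : ∀ t : ℝ, HasDerivAt h
      (L * t * ‖st‖ ^ 3 - (⟪gradient F (c t), st⟫_ℝ - a - t * b)) t := by
    intro t
    have hg : HasDerivAt (fun t => F (c t)) (⟪gradient F (c t), st⟫_ℝ) t := by
      have h1 := ((hF1 (c t)).hasFDerivAt).comp_hasDerivAt t (hc t)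
      rw [InnerProductSpace.toDual_apply_apply] at h1
      exact h1
    have hsq : HasDerivAt (fun t : ℝ => t ^ 2) (2 * t) t := by
      simpa using hasDerivAt_pow 2 t
    have h2 : HasDerivAt (fun t : ℝ => L / 2 * t ^ 2 * ‖st‖ ^ 3)
        (L / 2 * (2 * t) * ‖st‖ ^ 3) t := (hsq.const_mul (L / 2)).mul_const _
    have h3 : HasDerivAt (fun t : ℝ => t * a) a t := by
      simpa using (hasDerivAt_id t).mul_const a
    have h4 : HasDerivAt (fun t : ℝ => t ^ 2 / 2 * b) (2 * t / 2 * b) t :=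
      (hsq.div_const 2).mul_const b
    have h5 := h2.sub ((((hg.sub_const (F (c 0))).sub h3).sub h4))
    have heq : L * t * ‖st‖ ^ 3 - (⟪gradient F (c t), st⟫_ℝ - a - t * b)
        = L / 2 * (2 * t) * ‖st‖ ^ 3 - (⟪gradient F (c t), st⟫_ℝ - a - 2 * t / 2 * b) := by
      ring
    rw [heq]
    exact h5
  have hderiv_nonneg : ∀ t ∈ Set.Icc (0:ℝ) 1,
      0 ≤ L * t * ‖st‖ ^ 3 - (⟪gradient F (c t), st⟫_ℝ - a - t * b) := by
    intro t ht
    have hinner : ⟪gradient F (c t), st⟫_ℝ - a - t * b = ⟪G t - G 0, st⟫_ℝ := by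
      rw [hG_def]
      simp only [hc0, zero_smul, sub_zero]
      rw [inner_sub_left, inner_sub_left, real_inner_smul_left, ha_def, hb_def]
      ring
    rw [hinner, sub_nonneg]
    calc ⟪G t - G 0, st⟫_ℝ ≤ ‖G t - G 0‖ * ‖st‖ := real_inner_le_norm _ _
      _ ≤ (L * t * ‖st‖ ^ 2 * t) * ‖st‖ :=
          mul_le_mul_of_nonneg_right (hGbound t ht) (norm_nonneg st)
      _ ≤ (L * t * ‖st‖ ^ 2 * 1) * ‖st‖ := by
          apply mul_le_mul_of_nonneg_right _ (norm_nonneg st)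
          apply mul_le_mul_of_nonneg_left ht.2
          exact mul_nonneg (mul_nonneg hL.le ht.1) (by positivity)
      _ = L * t * ‖st‖ ^ 3 := by ring
  -- monotonicity of h on [0,1]
  have hmono : MonotoneOn h (Set.Icc (0:ℝ) 1) := by
    apply monotoneOn_of_deriv_nonneg (convex_Icc 0 1)
    · exact fun t _ => ((hh t).continuousAt).continuousWithinAt
    · intro t _
      exact ((hh t).differentiableAt).differentiableWithinAt
    · intro t ht
      rw [(hh t).deriv]
      exact hderiv_nonneg t (interior_subset ht)
  have h01 : h 0 ≤ h 1 := hmono (Set.left_mem_Icc.2 zero_le_one)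
    (Set.right_mem_Icc.2 zero_le_one) zero_le_one
  have htaylor : F (xt + st) - F xt - a - b / 2 ≤ L / 2 * ‖st‖ ^ 3 := by
    have e0 : h 0 = 0 := by simp [hh_def]
    have e1 : h 1 = L / 2 * ‖st‖ ^ 3 - (F (xt + st) - F xt - a - b / 2) := by
      simp only [hh_def, hc0, hc1]
      ring
    rw [e0, e1] at h01
    linarith
  -- Hessian inexactness bound
  have hHbound : b - ⟪st, Ht st⟫_ℝ ≤ ε * ‖st‖ ^ 2 := by
    have heq : b - ⟪st, Ht st⟫_ℝ = ⟪(Hess xt - Ht) st, st⟫_ℝ := by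
      rw [hb_def, ContinuousLinearMap.sub_apply, inner_sub_left,
        real_inner_comm st (Ht st)]
    have hnorm : ‖(Hess xt - Ht) st‖ = ‖(Ht - Hess xt) st‖ := by
      rw [show (Hess xt - Ht) st = -((Ht - Hess xt) st) by
        simp [ContinuousLinearMap.sub_apply]]
      rw [norm_neg]
    calc b - ⟪st, Ht st⟫_ℝ = ⟪(Hess xt - Ht) st, st⟫_ℝ := heq
      _ ≤ ‖(Hess xt - Ht) st‖ * ‖st‖ := real_inner_le_norm _ _
      _ ≤ (ε * ‖st‖) * ‖st‖ := by
          rw [hnorm]; exact mul_le_mul_of_nonneg_right hHt (norm_nonneg st)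
      _ = ε * ‖st‖ ^ 2 := by ring
  rw [hm st]
  nlinarith [htaylor, hHbound]
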